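/- Under the setting of Proposition 1, the optimal value of the temporally aggregated model is a lower bound on the optimal value of the full-scale model: if S ⊆ ℝ denotes the set of full-scale objective values F(z) over all z satisfying the full-scale constraints, and S̄ ⊆ ℝ denotes the set of aggregated objective values F̄(z̄) over all z̄ satisfying the aggregated constraints, then for every v ∈ S there exists v̄ ∈ S̄ with v̄ ≤ v; consequently, if S is nonempty and S̄ is bounded below, then inf S̄ ≤ inf S. -/

import Mathlib

/-- Decision variables of the VPP dispatch model (full-scale: indexed by time steps `k`;
temporally aggregated: indexed by clusters `r`). -/
structure DispatchVars (Ω N G : Type*) where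
  /-- energy output of the VPP -/
  e : Ω → ℕ → ℝ
  /-- non-supplied energy -/
  ens : Ω → ℕ → ℝ
  /-- storage state of charge -/
  es : N → Ω → ℕ → ℝ
  /-- thermal power output -/
  pth : G → Ω → ℕ → ℝ
  /-- storage charging power -/
  pc : N → Ω → ℕ → ℝ
  /-- storage discharging power -/
  pd : N → Ω → ℕ → ℝ

/-- Parameters of the VPP dispatch model. -/
structure VPPParams (Ω N G : Type*) where
  /-- sampling time -/
  Δ : ℝ
  /-- charging / discharging efficiencies -/
  (ηc ηd : N → ℝ)
  /-- initial storage states -/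
  Es0 : N → ℝ
  /-- storage state bounds -/
  (Esmin Esmax : N → ℝ)
  /-- charging power bounds -/
  (Pcmin Pcmax : N → ℝ)
  /-- discharging power bounds -/
  (Pdmin Pdmax : N → ℝ)
  /-- thermal capacity -/
  Pthmax : G → ℝ
  /-- emission coefficients and limits -/
  (αg βg Lg : G → ℝ)
  /-- ramp limits -/
  Rth : G → ℝ
  /-- vRES forecast and demand forecast -/
  (Pv D : Ω → ℕ → ℝ)
  /-- energy prices -/
  π : Ω → ℕ → ℝ
  /-- thermal generation cost -/
  Cth : G → ℝ
  /-- non-supplied energy penalty -/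
  Cns : ℝ
  /-- storage charging / discharging costs -/
  (Cc Cd : N → ℝ)
  /-- storage reference-deviation penalty and reference states -/
  (Cref Eref : N → ℝ)

/-- Feasibility for the full-scale stochastic dispatch model over the horizon
`{0, ..., K-1}`: storage dynamics, initial state, state-of-charge bounds,
charging/discharging bounds, thermal bounds, quadratic emission constraints,
ramp constraints, energy balance, and nonnegativity of all variables. -/
def FSFeasible {Ω N G : Type*} [Fintype N] [Fintype G]
    (P : VPPParams Ω N G) (K : ℕ) (z : DispatchVars Ω N G) : Prop :=
  (∀ n ω k, k + 2 ≤ K →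
      z.es n ω (k + 1) = z.es n ω k + (P.ηc n * z.pc n ω k - P.ηd n * z.pd n ω k) * P.Δ) ∧
  (∀ n ω, z.es n ω 0 = P.Es0 n) ∧
  (∀ n ω k, k < K → P.Esmin n ≤ z.es n ω k ∧ z.es n ω k ≤ P.Esmax n) ∧
  (∀ n ω k, k < K → P.Pcmin n ≤ z.pc n ω k ∧ z.pc n ω k ≤ P.Pcmax n) ∧
  (∀ n ω k, k < K → P.Pdmin n ≤ z.pd n ω k ∧ z.pd n ω k ≤ P.Pdmax n) ∧
  (∀ g ω k, k < K → 0 ≤ z.pth g ω k ∧ z.pth g ω k ≤ P.Pthmax g) ∧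
  (∀ g ω k, k < K → P.αg g * z.pth g ω k ^ 2 + P.βg g * z.pth g ω k ≤ P.Lg g) ∧
  (∀ g ω k, k + 2 ≤ K → |z.pth g ω (k + 1) - z.pth g ω k| ≤ P.Rth g) ∧
  (∀ ω k, k < K →
      z.e ω k = P.Pv ω k * P.Δ - P.D ω k
        + (∑ n : N, (z.pd n ω k - z.pc n ω k)) * P.Δ
        + (∑ g : G, z.pth g ω k) * P.Δ + z.ens ω k) ∧
  (∀ ω k, k < K → 0 ≤ z.e ω k ∧ 0 ≤ z.ens ω k) ∧
  (∀ n ω k, k < K → 0 ≤ z.es n ω k ∧ 0 ≤ z.pc n ω k ∧ 0 ≤ z.pd n ω k)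

/-- Full-scale objective `F`: negated revenue, thermal generation costs, non-supplied
energy penalty, storage charging/discharging costs, and quadratic storage-reference
penalties, summed over scenarios and time steps. -/
noncomputable def FSObj {Ω N G : Type*} [Fintype Ω] [Fintype N] [Fintype G]
    (P : VPPParams Ω N G) (K : ℕ) (z : DispatchVars Ω N G) : ℝ :=
  (∑ ω : Ω, ∑ k ∈ Finset.range K,
      (-(P.π ω k) * z.e ω k
        + (∑ g : G, P.Cth g * z.pth g ω k * P.Δ)
        + P.Cns * z.ens ω k
        + ∑ n : N, (P.Cc n * z.pc n ω k + P.Cd n * z.pd n ω k) * P.Δ))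
    + ∑ n : N, ∑ ω : Ω, ∑ k ∈ Finset.range K, P.Cref n * (z.es n ω k - P.Eref n) ^ 2

/-- Cardinality `|K_r| = t (r+1) - t r` (as a real number) of the contiguous cluster
`K_r = {t r, ..., t (r+1) - 1}`. -/
def clusterCard (t : ℕ → ℕ) (r : ℕ) : ℝ := ((t (r + 1) - t r : ℕ) : ℝ)

/-- Feasibility for the temporally aggregated dispatch model over a contiguous cluster
partition `K_r = {t r, ..., t (r+1) - 1}`, `r = 0, ..., R-1`, of the horizon:
aggregated balance, aggregated storage dynamics with cluster cardinality multipliers,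
aggregated bounds, aggregated emission constraints with compensation term
`α_g*(|K_r|-1)*(P^th_max)²`, aggregated ramp constraints with compensation terms
`R^th_g*(|K_r|-1)/2`, and nonnegativity. -/
def AggFeasible {Ω N G : Type*} [Fintype N] [Fintype G]
    (P : VPPParams Ω N G) (R : ℕ) (t : ℕ → ℕ) (z : DispatchVars Ω N G) : Prop :=
  (∀ ω r, r < R →
      z.e ω r = (∑ k ∈ Finset.Ico (t r) (t (r + 1)), (P.Pv ω k * P.Δ - P.D ω k))
          / clusterCard t r
        + (∑ g : G, z.pth g ω r) * P.Δ + z.ens ω r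
        + (∑ n : N, (z.pd n ω r - z.pc n ω r)) * P.Δ) ∧
  (∀ n ω r, r + 2 ≤ R →
      z.es n ω (r + 1) = z.es n ω r
        + clusterCard t r * (P.ηc n * z.pc n ω r - P.ηd n * z.pd n ω r) * P.Δ) ∧
  (∀ n ω, z.es n ω 0 = P.Es0 n) ∧
  (∀ n ω r, r < R → P.Esmin n ≤ z.es n ω r ∧ z.es n ω r ≤ P.Esmax n) ∧
  (∀ n ω r, r < R → P.Pcmin n ≤ z.pc n ω r ∧ z.pc n ω r ≤ P.Pcmax n) ∧
  (∀ n ω r, r < R → P.Pdmin n ≤ z.pd n ω r ∧ z.pd n ω r ≤ P.Pdmax n) ∧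
  (∀ g ω r, r < R → 0 ≤ z.pth g ω r ∧ z.pth g ω r ≤ P.Pthmax g) ∧
  (∀ g ω r, r < R →
      P.αg g * clusterCard t r * z.pth g ω r ^ 2
        - P.αg g * (clusterCard t r - 1) * P.Pthmax g ^ 2
        + P.βg g * z.pth g ω r ≤ P.Lg g) ∧
  (∀ g ω r, r + 2 ≤ R →
      z.pth g ω (r + 1) - z.pth g ω r * clusterCard t r
          ≤ P.Rth g + P.Rth g * (clusterCard t (r + 1) - 1) / 2 ∧
      z.pth g ω r - z.pth g ω (r + 1) * clusterCard t (r + 1)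
          ≤ P.Rth g + P.Rth g * (clusterCard t r - 1) / 2) ∧
  (∀ ω r, r < R → 0 ≤ z.e ω r ∧ 0 ≤ z.ens ω r) ∧
  (∀ n ω r, r < R → 0 ≤ z.es n ω r ∧ 0 ≤ z.pc n ω r ∧ 0 ≤ z.pd n ω r)

/-- Aggregated objective `F̄`: same cost structure as `F`, with cluster-wise maximum
prices and cluster cardinality weights. -/
noncomputable def AggObj {Ω N G : Type*} [Fintype Ω] [Fintype N] [Fintype G]
    (P : VPPParams Ω N G) (R : ℕ) (t : ℕ → ℕ) (hmono : ∀ r < R, t r < t (r + 1))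
    (z : DispatchVars Ω N G) : ℝ :=
  (∑ ω : Ω, ∑ r : Fin R,
      clusterCard t r.1 *
        (-(((Finset.Ico (t r.1) (t (r.1 + 1))).sup'
              (Finset.nonempty_Ico.mpr (hmono r.1 r.2)) (P.π ω)) * z.e ω r.1)
          + (∑ g : G, P.Cth g * z.pth g ω r.1 * P.Δ)
          + P.Cns * z.ens ω r.1
          + ∑ n : N, (P.Cc n * z.pc n ω r.1 + P.Cd n * z.pd n ω r.1) * P.Δ))
    + ∑ n : N, ∑ ω : Ω, ∑ r : Fin R, P.Cref n * (z.es n ω r.1 - P.Eref n) ^ 2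

/-- The aggregation map: all aggregated variables are cluster averages, except the
aggregated storage states, which are the states at the first time step `t r` of each
cluster. -/
noncomputable def aggregate {Ω N G : Type*} (t : ℕ → ℕ) (z : DispatchVars Ω N G) :
    DispatchVars Ω N G where
  e := fun ω r => (1 / clusterCard t r) * ∑ k ∈ Finset.Ico (t r) (t (r + 1)), z.e ω k
  ens := fun ω r => (1 / clusterCard t r) * ∑ k ∈ Finset.Ico (t r) (t (r + 1)), z.ens ω k
  es := fun n ω r => z.es n ω (t r)
  pth := fun g ω r => (1 / clusterCard t r) * ∑ k ∈ Finset.Ico (t r) (t (r + 1)), z.pth g ω k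
  pc := fun n ω r => (1 / clusterCard t r) * ∑ k ∈ Finset.Ico (t r) (t (r + 1)), z.pc n ω k
  pd := fun n ω r => (1 / clusterCard t r) * ∑ k ∈ Finset.Ico (t r) (t (r + 1)), z.pd n ω k

section VPPAux

open Finset in
private lemma vpp_t_mono {t : ℕ → ℕ} {R : ℕ} (hmono : ∀ r < R, t r < t (r + 1)) :
    ∀ a b, a ≤ b → b ≤ R → t a ≤ t b := by
  intro a b hab hbR
  induction b with
  | zero => simp [Nat.le_zero.mp hab]
  | succ n ih =>
    rcases Nat.lt_or_ge a (n+1) with h | h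
    · exact le_trans (ih (Nat.lt_succ_iff.mp h) (le_trans (Nat.le_succ n) hbR))
        (le_of_lt (hmono n (Nat.lt_of_lt_of_le (Nat.lt_succ_self n) hbR)))
    · have : a = n + 1 := le_antisymm hab h
      simp [this]

private lemma vpp_t_strict {t : ℕ → ℕ} {R : ℕ} (hmono : ∀ r < R, t r < t (r + 1)) :
    ∀ a b, a < b → b ≤ R → t a < t b := by
  intro a b hab hbR
  have h1 : t a < t (a+1) := hmono a (Nat.lt_of_lt_of_le hab hbR)
  exact Nat.lt_of_lt_of_le h1 (vpp_t_mono hmono (a+1) b hab hbR)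

private lemma vpp_telescope (f g : ℕ → ℝ) (K : ℕ)
    (h : ∀ k, k + 2 ≤ K → f (k + 1) = f k + g k) :
    ∀ i j, i ≤ j → j + 1 ≤ K → f j = f i + ∑ k ∈ Finset.Ico i j, g k := by
  intro i j hij hjK
  induction j, hij using Nat.le_induction with
  | base => simp
  | succ n hn ih =>
    have hnK : n + 1 ≤ K := by omega
    rw [h n (by omega), ih hnK, Finset.sum_Ico_succ_top hn]
    ring

private lemma vpp_ramp_spread (p : ℕ → ℝ) (Rt : ℝ) (K : ℕ)
    (h : ∀ k, k + 2 ≤ K → |p (k + 1) - p k| ≤ Rt) :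
    ∀ i j, i ≤ j → j + 1 ≤ K → |p j - p i| ≤ Rt * ((j : ℝ) - i) := by
  intro i j hij hjK
  induction j, hij using Nat.le_induction with
  | base => simp
  | succ n hn ih =>
    have h1 : |p (n+1) - p n| ≤ Rt := h n (by omega)
    have h2 : |p n - p i| ≤ Rt * ((n:ℝ) - i) := ih (by omega)
    calc |p (n+1) - p i| ≤ |p (n+1) - p n| + |p n - p i| := by
          have := abs_sub_le (p (n+1)) (p n) (p i); linarith
      _ ≤ Rt + Rt * ((n:ℝ) - i) := add_le_add h1 h2
      _ = Rt * (((n+1 : ℕ) : ℝ) - i) := by push_cast; ring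

private lemma vpp_sum_partition (t : ℕ → ℕ) (R : ℕ) (hm : ∀ r < R, t r ≤ t (r + 1)) (f : ℕ → ℝ) :
    ∑ k ∈ Finset.Ico (t 0) (t R), f k
      = ∑ r ∈ Finset.range R, ∑ k ∈ Finset.Ico (t r) (t (r + 1)), f k := by
  induction R with
  | zero => simp
  | succ n ih =>
    have h0n : t 0 ≤ t n := by
      clear ih
      induction n with
      | zero => exact le_refl _
      | succ m ihm => exact le_trans (ihm (fun r hr => hm r (by omega))) (hm m (by omega))
    rw [Finset.sum_range_succ, ← ih (fun r hr => hm r (by omega)),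
      ← Finset.sum_Ico_consecutive _ h0n (hm n (by omega))]

private lemma vpp_le_avg {s : Finset ℕ} (hs : s.Nonempty) (x : ℕ → ℝ) (m : ℝ)
    (h : ∀ k ∈ s, m ≤ x k) : m ≤ (1 / (s.card : ℝ)) * ∑ k ∈ s, x k := by
  have hc : (0:ℝ) < s.card := by exact_mod_cast Finset.card_pos.mpr hs
  have : s.card • m ≤ ∑ k ∈ s, x k := Finset.card_nsmul_le_sum s x m h
  rw [nsmul_eq_mul] at this
  rw [one_div, inv_mul_eq_div, le_div_iff₀ hc]
  linarith

private lemma vpp_avg_le {s : Finset ℕ} (hs : s.Nonempty) (x : ℕ → ℝ) (M : ℝ)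
    (h : ∀ k ∈ s, x k ≤ M) : (1 / (s.card : ℝ)) * ∑ k ∈ s, x k ≤ M := by
  have hc : (0:ℝ) < s.card := by exact_mod_cast Finset.card_pos.mpr hs
  have : ∑ k ∈ s, x k ≤ s.card • M := Finset.sum_le_card_nsmul s x M h
  rw [nsmul_eq_mul] at this
  rw [one_div, inv_mul_eq_div, div_le_iff₀ hc]
  linarith

private lemma vpp_sq_avg_le {s : Finset ℕ} (hs : s.Nonempty) (x : ℕ → ℝ) :
    ((1 / (s.card : ℝ)) * ∑ k ∈ s, x k) ^ 2 ≤ (1 / (s.card : ℝ)) * ∑ k ∈ s, x k ^ 2 := by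
  have hc : (0:ℝ) < s.card := by exact_mod_cast Finset.card_pos.mpr hs
  have h := sq_sum_le_card_mul_sum_sq (s := s) (f := x)
  rw [one_div, mul_pow, inv_pow, inv_mul_eq_div, inv_mul_eq_div,
    div_le_div_iff₀ (by positivity) hc]
  nlinarith [h, sq_nonneg ((s.card : ℝ))]

private lemma vpp_grange (m : ℕ) :
    ∑ j ∈ Finset.range m, ((j:ℝ) + 1) = m * (m + 1) / 2 := by
  induction m with
  | zero => simp
  | succ n ih => rw [Finset.sum_range_succ, ih]; push_cast; ring

private lemma vpp_gauss1 (a b : ℕ) :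
    ∑ k ∈ Finset.Ico a b, ((k:ℝ) - (a:ℝ) + 1)
      = ((b - a : ℕ):ℝ) * (((b - a : ℕ):ℝ) + 1) / 2 := by
  rw [Finset.sum_Ico_eq_sum_range, ← vpp_grange (b - a)]
  exact Finset.sum_congr rfl fun j _ => by push_cast; ring

private lemma vpp_gauss2 (a b : ℕ) (hab : a ≤ b) :
    ∑ k ∈ Finset.Ico a b, ((b:ℝ) - (k:ℝ))
      = ((b - a : ℕ):ℝ) * (((b - a : ℕ):ℝ) + 1) / 2 := by
  rw [Finset.sum_Ico_eq_sum_range, ← vpp_grange (b - a)]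
  refine (Finset.sum_nbij' (fun j => b - a - 1 - j) (fun j => b - a - 1 - j) ?_ ?_ ?_ ?_ ?_).symm
  · intro j hj; rw [Finset.mem_range] at *; omega
  · intro j hj; rw [Finset.mem_range] at *; omega
  · intro j hj; rw [Finset.mem_range] at hj; omega
  · intro j hj; rw [Finset.mem_range] at hj; omega
  · intro j hj
    rw [Finset.mem_range] at hj
    rw [show a + (b - a - 1 - j) = b - (j + 1) from by omega, Nat.cast_sub (by omega)]
    push_cast
    ring

end VPPAux

set_option maxHeartbeats 1000000 in
/-- the optimal value of the temporally aggregated model is a lower bound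
on the optimal value of the full-scale model.  If `S` is the set of full-scale objective
values over full-scale feasible points and `S̄` the set of aggregated objective values
over aggregated feasible points, then every `v ∈ S` is dominated from below by some
`v̄ ∈ S̄`; consequently, if `S` is nonempty and `S̄` is bounded below, `inf S̄ ≤ inf S`. -/
theorem agg_optimal_value_le_full_optimal_value
    {Ω N G : Type*} [Fintype Ω] [Fintype N] [Fintype G]
    [Nonempty Ω] [Nonempty N] [Nonempty G]
    (P : VPPParams Ω N G) (K R : ℕ) (hK : 1 ≤ K)
    (t : ℕ → ℕ) (ht0 : t 0 = 0) (htR : t R = K) (hmono : ∀ r < R, t r < t (r + 1))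
    (hΔ : 0 < P.Δ)
    (hEs : ∀ n, P.Esmin n ≤ P.Esmax n)
    (hPc : ∀ n, P.Pcmin n ≤ P.Pcmax n)
    (hPd : ∀ n, P.Pdmin n ≤ P.Pdmax n)
    (hPth : ∀ g, 0 ≤ P.Pthmax g)
    (hα : ∀ g, 0 ≤ P.αg g)
    (hRth : ∀ g, 0 ≤ P.Rth g)
    (hCref : ∀ n, 0 ≤ P.Cref n)
    (S Sbar : Set ℝ)
    (hS : S = {v : ℝ | ∃ z : DispatchVars Ω N G, FSFeasible P K z ∧ FSObj P K z = v})
    (hSbar : Sbar = {v : ℝ | ∃ zbar : DispatchVars Ω N G,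
        AggFeasible P R t zbar ∧ AggObj P R t hmono zbar = v}) :
    (∀ v ∈ S, ∃ vbar ∈ Sbar, vbar ≤ v) ∧
    (S.Nonempty → BddBelow Sbar → sInf Sbar ≤ sInf S) := by
  subst hS hSbar
  have key : ∀ v ∈ {v : ℝ | ∃ z : DispatchVars Ω N G, FSFeasible P K z ∧ FSObj P K z = v},
      ∃ vbar ∈ {v : ℝ | ∃ zbar : DispatchVars Ω N G,
        AggFeasible P R t zbar ∧ AggObj P R t hmono zbar = v}, vbar ≤ v := by
    rintro v ⟨z, hz, rfl⟩
    obtain ⟨hdyn, hinit, hesb, hpcb, hpdb, hpthb, hem, hrampz, hbal, hnn1, hnn2⟩ := hz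
    have htK : ∀ r, r ≤ R → t r ≤ K := by
      intro r hr
      rcases Nat.eq_or_lt_of_le hr with h | h
      · exact le_of_eq (h ▸ htR)
      · exact htR ▸ vpp_t_mono hmono r R hr le_rfl
    have htKlt : ∀ r, r < R → t r < K := fun r hr => htR ▸ vpp_t_strict hmono r R hr le_rfl
    have hne : ∀ r, r < R → (Finset.Ico (t r) (t (r+1))).Nonempty :=
      fun r hr => Finset.nonempty_Ico.mpr (hmono r hr)
    have hkK : ∀ r, r < R → ∀ k ∈ Finset.Ico (t r) (t (r+1)), k < K := by
      intro r hr k hk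
      rw [Finset.mem_Ico] at hk
      exact lt_of_lt_of_le hk.2 (htK (r+1) hr)
    have hcard : ∀ r, ((Finset.Ico (t r) (t (r+1))).card : ℝ) = clusterCard t r := by
      intro r; simp [clusterCard, Nat.card_Ico]
    have hcpos : ∀ r, r < R → 0 < clusterCard t r := by
      intro r hr
      have h2 : 0 < t (r+1) - t r := Nat.sub_pos_of_lt (hmono r hr)
      simp only [clusterCard]
      exact_mod_cast h2
    have hc1 : ∀ r, r < R → 1 ≤ clusterCard t r := by
      intro r hr
      have h2 : 1 ≤ t (r+1) - t r := by have := hmono r hr; omega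
      simp only [clusterCard]
      exact_mod_cast h2
    have hfeas : AggFeasible P R t (aggregate t z) := by
      refine ⟨?_, ?_, ?_, ?_, ?_, ?_, ?_, ?_, ?_, ?_, ?_⟩
      · -- balance
        intro ω r hr
        simp only [aggregate]
        have hswap1 : ∑ k ∈ Finset.Ico (t r) (t (r+1)), ∑ n : N, (z.pd n ω k - z.pc n ω k)
            = ∑ n : N, (∑ k ∈ Finset.Ico (t r) (t (r+1)), z.pd n ω k
                - ∑ k ∈ Finset.Ico (t r) (t (r+1)), z.pc n ω k) := by
          rw [Finset.sum_comm]
          exact Finset.sum_congr rfl fun n _ => Finset.sum_sub_distrib _ _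
        have hswap2 : ∑ k ∈ Finset.Ico (t r) (t (r+1)), ∑ g : G, z.pth g ω k
            = ∑ g : G, ∑ k ∈ Finset.Ico (t r) (t (r+1)), z.pth g ω k := Finset.sum_comm
        have hsum : ∑ k ∈ Finset.Ico (t r) (t (r+1)), z.e ω k
            = ∑ k ∈ Finset.Ico (t r) (t (r+1)), (P.Pv ω k * P.Δ - P.D ω k)
              + (∑ n : N, (∑ k ∈ Finset.Ico (t r) (t (r+1)), z.pd n ω k
                  - ∑ k ∈ Finset.Ico (t r) (t (r+1)), z.pc n ω k)) * P.Δ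
              + (∑ g : G, ∑ k ∈ Finset.Ico (t r) (t (r+1)), z.pth g ω k) * P.Δ
              + ∑ k ∈ Finset.Ico (t r) (t (r+1)), z.ens ω k := by
          rw [Finset.sum_congr rfl (fun k hk => hbal ω k (hkK r hr k hk))]
          simp only [Finset.sum_add_distrib, ← Finset.sum_mul]
          rw [hswap1, hswap2]
        rw [hsum]
        have hg : ∑ g : G, (1 / clusterCard t r) * ∑ k ∈ Finset.Ico (t r) (t (r+1)), z.pth g ω k
            = (1 / clusterCard t r) * ∑ g : G, ∑ k ∈ Finset.Ico (t r) (t (r+1)), z.pth g ω k :=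
          (Finset.mul_sum _ _ _).symm
        have hn : ∑ n : N, ((1 / clusterCard t r) * ∑ k ∈ Finset.Ico (t r) (t (r+1)), z.pd n ω k
              - (1 / clusterCard t r) * ∑ k ∈ Finset.Ico (t r) (t (r+1)), z.pc n ω k)
            = (1 / clusterCard t r) * ∑ n : N, (∑ k ∈ Finset.Ico (t r) (t (r+1)), z.pd n ω k
              - ∑ k ∈ Finset.Ico (t r) (t (r+1)), z.pc n ω k) := by
          rw [Finset.mul_sum]
          exact Finset.sum_congr rfl fun n _ => by ring
        rw [hg, hn]
        ring
      · -- storage dynamics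
        intro n ω r hr2
        have hr1 : r + 1 < R := by omega
        simp only [aggregate]
        have htel := vpp_telescope (z.es n ω)
          (fun k => (P.ηc n * z.pc n ω k - P.ηd n * z.pd n ω k) * P.Δ) K
          (fun k hk => hdyn n ω k hk) (t r) (t (r+1))
          (le_of_lt (hmono r (by omega))) (by have := htKlt (r+1) hr1; omega)
        rw [htel]
        have hcne : clusterCard t r ≠ 0 := ne_of_gt (hcpos r (by omega))
        rw [← Finset.sum_mul, Finset.sum_sub_distrib, ← Finset.mul_sum, ← Finset.mul_sum]
        field_simp
      · -- initial state
        intro n ω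
        simp only [aggregate]
        rw [ht0]
        exact hinit n ω
      · -- state bounds
        intro n ω r hr
        simp only [aggregate]
        exact hesb n ω (t r) (htKlt r hr)
      · -- pc bounds
        intro n ω r hr
        simp only [aggregate]
        rw [← hcard r]
        exact ⟨vpp_le_avg (hne r hr) _ _ (fun k hk => (hpcb n ω k (hkK r hr k hk)).1),
          vpp_avg_le (hne r hr) _ _ (fun k hk => (hpcb n ω k (hkK r hr k hk)).2)⟩
      · -- pd bounds
        intro n ω r hr
        simp only [aggregate]
        rw [← hcard r]
        exact ⟨vpp_le_avg (hne r hr) _ _ (fun k hk => (hpdb n ω k (hkK r hr k hk)).1),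
          vpp_avg_le (hne r hr) _ _ (fun k hk => (hpdb n ω k (hkK r hr k hk)).2)⟩
      · -- pth bounds
        intro g ω r hr
        simp only [aggregate]
        rw [← hcard r]
        exact ⟨vpp_le_avg (hne r hr) _ _ (fun k hk => (hpthb g ω k (hkK r hr k hk)).1),
          vpp_avg_le (hne r hr) _ _ (fun k hk => (hpthb g ω k (hkK r hr k hk)).2)⟩
      · -- emission
        intro g ω r hr
        simp only [aggregate]
        have hcpos' := hcpos r hr
        have hq : ((1 / clusterCard t r) * ∑ k ∈ Finset.Ico (t r) (t (r+1)), z.pth g ω k) ^ 2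
            ≤ (1 / clusterCard t r) * ∑ k ∈ Finset.Ico (t r) (t (r+1)), z.pth g ω k ^ 2 := by
          rw [← hcard r]; exact vpp_sq_avg_le (hne r hr) _
        have h0a : 0 ≤ (1 / clusterCard t r) * ∑ k ∈ Finset.Ico (t r) (t (r+1)), z.pth g ω k := by
          rw [← hcard r]
          exact vpp_le_avg (hne r hr) _ _ (fun k hk => (hpthb g ω k (hkK r hr k hk)).1)
        have haP : (1 / clusterCard t r) * ∑ k ∈ Finset.Ico (t r) (t (r+1)), z.pth g ω k
            ≤ P.Pthmax g := by
          rw [← hcard r]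
          exact vpp_avg_le (hne r hr) _ _ (fun k hk => (hpthb g ω k (hkK r hr k hk)).2)
        have hsumem : ∑ k ∈ Finset.Ico (t r) (t (r+1)),
            (P.αg g * z.pth g ω k ^ 2 + P.βg g * z.pth g ω k)
            ≤ clusterCard t r * P.Lg g := by
          rw [← hcard r, ← nsmul_eq_mul]
          exact Finset.sum_le_card_nsmul _ _ _ (fun k hk => hem g ω k (hkK r hr k hk))
        have hexp : P.αg g * ((1 / clusterCard t r)
              * ∑ k ∈ Finset.Ico (t r) (t (r+1)), z.pth g ω k ^ 2)
            + P.βg g * ((1 / clusterCard t r)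
              * ∑ k ∈ Finset.Ico (t r) (t (r+1)), z.pth g ω k)
            = (1 / clusterCard t r) * ∑ k ∈ Finset.Ico (t r) (t (r+1)),
                (P.αg g * z.pth g ω k ^ 2 + P.βg g * z.pth g ω k) := by
          rw [Finset.sum_add_distrib, ← Finset.mul_sum, ← Finset.mul_sum]
          ring
        have havg : P.αg g * ((1 / clusterCard t r)
              * ∑ k ∈ Finset.Ico (t r) (t (r+1)), z.pth g ω k ^ 2)
            + P.βg g * ((1 / clusterCard t r)
              * ∑ k ∈ Finset.Ico (t r) (t (r+1)), z.pth g ω k) ≤ P.Lg g := by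
          rw [hexp]
          calc (1 / clusterCard t r) * ∑ k ∈ Finset.Ico (t r) (t (r+1)),
                (P.αg g * z.pth g ω k ^ 2 + P.βg g * z.pth g ω k)
              ≤ (1 / clusterCard t r) * (clusterCard t r * P.Lg g) :=
                mul_le_mul_of_nonneg_left hsumem (by positivity)
            _ = P.Lg g := by field_simp
        have hsq : ((1 / clusterCard t r) * ∑ k ∈ Finset.Ico (t r) (t (r+1)), z.pth g ω k) ^ 2
            ≤ P.Pthmax g ^ 2 := by nlinarith
        have hc1' := hc1 r hr
        nlinarith [mul_nonneg (hα g) (sub_nonneg.mpr hq),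
          mul_nonneg (sub_nonneg.mpr hc1') (mul_nonneg (hα g) (sub_nonneg.mpr hsq)), havg]
      · -- ramp
        intro g ω r hr2
        have hrlt : r < R := by omega
        have hr1lt : r + 1 < R := by omega
        have hrampg : ∀ k, k + 2 ≤ K → |z.pth g ω (k+1) - z.pth g ω k| ≤ P.Rth g :=
          fun k hk => hrampz g ω k hk
        simp only [aggregate]
        have hKup : t (r+1+1) ≤ K := htK (r+1+1) (by omega)
        have hc' := hcpos (r+1) hr1lt
        have hcr := hcpos r hrlt
        have hmono1 := hmono r hrlt
        have hmono2 := hmono (r+1) hr1lt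
        have htK1 := htKlt (r+1) hr1lt
        constructor
        · have hkmem : t (r+1) - 1 ∈ Finset.Ico (t r) (t (r+1)) := by
            rw [Finset.mem_Ico]; omega
          have hA : z.pth g ω (t (r+1) - 1)
              ≤ ∑ k ∈ Finset.Ico (t r) (t (r+1)), z.pth g ω k :=
            Finset.single_le_sum (fun k hk => (hpthb g ω k (hkK r hrlt k hk)).1) hkmem
          have hterm : ∀ k ∈ Finset.Ico (t (r+1)) (t (r+1+1)),
              z.pth g ω k ≤ z.pth g ω (t (r+1) - 1)
                + P.Rth g * ((k:ℝ) - (t (r+1):ℝ) + 1) := by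
            intro k hk
            rw [Finset.mem_Ico] at hk
            have hspread := vpp_ramp_spread (z.pth g ω) (P.Rth g) K hrampg (t (r+1) - 1) k
              (by omega) (by omega)
            have hcast : ((t (r+1) - 1 : ℕ):ℝ) = (t (r+1):ℝ) - 1 := by
              rw [Nat.cast_sub (by omega)]; simp
            rw [hcast] at hspread
            have := le_abs_self (z.pth g ω k - z.pth g ω (t (r+1) - 1))
            linarith
          have hgsum : ∑ k ∈ Finset.Ico (t (r+1)) (t (r+1+1)), ((k:ℝ) - (t (r+1):ℝ) + 1)
              = clusterCard t (r+1) * (clusterCard t (r+1) + 1) / 2 := by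
            rw [vpp_gauss1]; simp [clusterCard]
          have hsum' : ∑ k ∈ Finset.Ico (t (r+1)) (t (r+1+1)), z.pth g ω k
              ≤ clusterCard t (r+1) * z.pth g ω (t (r+1) - 1)
                + P.Rth g * (clusterCard t (r+1) * (clusterCard t (r+1) + 1) / 2) := by
            calc ∑ k ∈ Finset.Ico (t (r+1)) (t (r+1+1)), z.pth g ω k
                ≤ ∑ k ∈ Finset.Ico (t (r+1)) (t (r+1+1)),
                    (z.pth g ω (t (r+1) - 1) + P.Rth g * ((k:ℝ) - (t (r+1):ℝ) + 1)) :=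
                  Finset.sum_le_sum hterm
              _ = clusterCard t (r+1) * z.pth g ω (t (r+1) - 1)
                + P.Rth g * (clusterCard t (r+1) * (clusterCard t (r+1) + 1) / 2) := by
                  rw [Finset.sum_add_distrib, Finset.sum_const, ← Finset.mul_sum, hgsum,
                    nsmul_eq_mul, hcard]
          have hfin : (1 / clusterCard t (r+1))
                * ∑ k ∈ Finset.Ico (t (r+1)) (t (r+1+1)), z.pth g ω k
              ≤ z.pth g ω (t (r+1) - 1)
                + P.Rth g * ((clusterCard t (r+1) + 1) / 2) := by
            have h1 := mul_le_mul_of_nonneg_left hsum' (le_of_lt (one_div_pos.mpr hc'))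
            have h2 : (1 / clusterCard t (r+1)) * (clusterCard t (r+1)
                  * z.pth g ω (t (r+1) - 1)
                + P.Rth g * (clusterCard t (r+1) * (clusterCard t (r+1) + 1) / 2))
                = z.pth g ω (t (r+1) - 1)
                  + P.Rth g * ((clusterCard t (r+1) + 1) / 2) := by
              field_simp
            linarith
          have hmulc : ((1 / clusterCard t r)
                * ∑ k ∈ Finset.Ico (t r) (t (r+1)), z.pth g ω k) * clusterCard t r
              = ∑ k ∈ Finset.Ico (t r) (t (r+1)), z.pth g ω k := by
            field_simp
          have hid : P.Rth g + P.Rth g * (clusterCard t (r+1) - 1) / 2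
              = P.Rth g * ((clusterCard t (r+1) + 1) / 2) := by ring
          linarith [hfin, hA, hmulc, hid]
        · have hkmem : t (r+1) ∈ Finset.Ico (t (r+1)) (t (r+1+1)) := by
            rw [Finset.mem_Ico]; omega
          have hA : z.pth g ω (t (r+1))
              ≤ ∑ k ∈ Finset.Ico (t (r+1)) (t (r+1+1)), z.pth g ω k :=
            Finset.single_le_sum (fun k hk => (hpthb g ω k (hkK (r+1) hr1lt k hk)).1) hkmem
          have hterm : ∀ k ∈ Finset.Ico (t r) (t (r+1)),
              z.pth g ω k ≤ z.pth g ω (t (r+1)) + P.Rth g * ((t (r+1):ℝ) - (k:ℝ)) := by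
            intro k hk
            rw [Finset.mem_Ico] at hk
            have hspread := vpp_ramp_spread (z.pth g ω) (P.Rth g) K hrampg k (t (r+1))
              (by omega) (by omega)
            have := neg_abs_le (z.pth g ω (t (r+1)) - z.pth g ω k)
            linarith
          have hgsum : ∑ k ∈ Finset.Ico (t r) (t (r+1)), ((t (r+1):ℝ) - (k:ℝ))
              = clusterCard t r * (clusterCard t r + 1) / 2 := by
            rw [vpp_gauss2 _ _ (by omega)]; simp [clusterCard]
          have hsum' : ∑ k ∈ Finset.Ico (t r) (t (r+1)), z.pth g ω k
              ≤ clusterCard t r * z.pth g ω (t (r+1))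
                + P.Rth g * (clusterCard t r * (clusterCard t r + 1) / 2) := by
            calc ∑ k ∈ Finset.Ico (t r) (t (r+1)), z.pth g ω k
                ≤ ∑ k ∈ Finset.Ico (t r) (t (r+1)),
                    (z.pth g ω (t (r+1)) + P.Rth g * ((t (r+1):ℝ) - (k:ℝ))) :=
                  Finset.sum_le_sum hterm
              _ = clusterCard t r * z.pth g ω (t (r+1))
                + P.Rth g * (clusterCard t r * (clusterCard t r + 1) / 2) := by
                  rw [Finset.sum_add_distrib, Finset.sum_const, ← Finset.mul_sum, hgsum,
                    nsmul_eq_mul, hcard]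
          have hfin : (1 / clusterCard t r)
                * ∑ k ∈ Finset.Ico (t r) (t (r+1)), z.pth g ω k
              ≤ z.pth g ω (t (r+1)) + P.Rth g * ((clusterCard t r + 1) / 2) := by
            have h1 := mul_le_mul_of_nonneg_left hsum' (le_of_lt (one_div_pos.mpr hcr))
            have h2 : (1 / clusterCard t r) * (clusterCard t r * z.pth g ω (t (r+1))
                + P.Rth g * (clusterCard t r * (clusterCard t r + 1) / 2))
                = z.pth g ω (t (r+1)) + P.Rth g * ((clusterCard t r + 1) / 2) := by
              field_simp
            linarith
          have hmulc : ((1 / clusterCard t (r+1))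
                * ∑ k ∈ Finset.Ico (t (r+1)) (t (r+1+1)), z.pth g ω k) * clusterCard t (r+1)
              = ∑ k ∈ Finset.Ico (t (r+1)) (t (r+1+1)), z.pth g ω k := by
            field_simp
          have hid : P.Rth g + P.Rth g * (clusterCard t r - 1) / 2
              = P.Rth g * ((clusterCard t r + 1) / 2) := by ring
          linarith [hfin, hA, hmulc, hid]
      · -- e/ens nonneg
        intro ω r hr
        simp only [aggregate]
        rw [← hcard r]
        exact ⟨vpp_le_avg (hne r hr) _ _ (fun k hk => (hnn1 ω k (hkK r hr k hk)).1),
          vpp_le_avg (hne r hr) _ _ (fun k hk => (hnn1 ω k (hkK r hr k hk)).2)⟩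
      · -- es/pc/pd nonneg
        intro n ω r hr
        simp only [aggregate]
        rw [← hcard r]
        exact ⟨(hnn2 n ω (t r) (htKlt r hr)).1,
          vpp_le_avg (hne r hr) _ _ (fun k hk => (hnn2 n ω k (hkK r hr k hk)).2.1),
          vpp_le_avg (hne r hr) _ _ (fun k hk => (hnn2 n ω k (hkK r hr k hk)).2.2)⟩
    have hconv : ∀ f : ℕ → ℝ, ∑ k ∈ Finset.range K, f k
        = ∑ r : Fin R, ∑ k ∈ Finset.Ico (t r.1) (t (r.1+1)), f k := by
      intro f
      calc ∑ k ∈ Finset.range K, f k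
          = ∑ r ∈ Finset.range R, ∑ k ∈ Finset.Ico (t r) (t (r+1)), f k := by
            rw [show Finset.range K = Finset.Ico (t 0) (t R) from by
              rw [ht0, htR, Finset.range_eq_Ico]]
            exact vpp_sum_partition t R (fun r hr => le_of_lt (hmono r hr)) f
        _ = ∑ r : Fin R, ∑ k ∈ Finset.Ico (t r.1) (t (r.1+1)), f k :=
            (Fin.sum_univ_eq_sum_range (fun r => ∑ k ∈ Finset.Ico (t r) (t (r+1)), f k) R).symm
    have hobj : AggObj P R t hmono (aggregate t z) ≤ FSObj P K z := by
      unfold AggObj FSObj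
      refine add_le_add ?_ ?_
      · refine Finset.sum_le_sum fun ω _ => ?_
        rw [hconv]
        refine Finset.sum_le_sum fun r _ => ?_
        have hr : r.1 < R := r.2
        simp only [aggregate]
        have hcne : clusterCard t r.1 ≠ 0 := ne_of_gt (hcpos r.1 hr)
        set s := Finset.Ico (t r.1) (t (r.1+1)) with hs
        set c := clusterCard t r.1 with hcdef
        set πb := s.sup' (Finset.nonempty_Ico.mpr (hmono r.1 r.2)) (P.π ω) with hπb
        have e1 : ∑ k ∈ s, ∑ gg : G, P.Cth gg * z.pth gg ω k * P.Δ
            = ∑ gg : G, P.Cth gg * (∑ k ∈ s, z.pth gg ω k) * P.Δ := by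
          rw [Finset.sum_comm]
          exact Finset.sum_congr rfl fun gg _ => by
            rw [← Finset.sum_mul, ← Finset.mul_sum]
        have e2 : ∑ k ∈ s, P.Cns * z.ens ω k = P.Cns * ∑ k ∈ s, z.ens ω k :=
          (Finset.mul_sum _ _ _).symm
        have e3 : ∑ k ∈ s, ∑ n : N, (P.Cc n * z.pc n ω k + P.Cd n * z.pd n ω k) * P.Δ
            = ∑ n : N, (P.Cc n * (∑ k ∈ s, z.pc n ω k)
                + P.Cd n * (∑ k ∈ s, z.pd n ω k)) * P.Δ := by
          rw [Finset.sum_comm]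
          exact Finset.sum_congr rfl fun n _ => by
            rw [← Finset.sum_mul, Finset.sum_add_distrib, ← Finset.mul_sum, ← Finset.mul_sum]
        have hsplit : ∑ k ∈ s, (-(P.π ω k) * z.e ω k
              + (∑ gg : G, P.Cth gg * z.pth gg ω k * P.Δ)
              + P.Cns * z.ens ω k
              + ∑ n : N, (P.Cc n * z.pc n ω k + P.Cd n * z.pd n ω k) * P.Δ)
            = ∑ k ∈ s, (-(P.π ω k) * z.e ω k)
              + ((∑ gg : G, P.Cth gg * (∑ k ∈ s, z.pth gg ω k) * P.Δ)
                + (P.Cns * ∑ k ∈ s, z.ens ω k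
                  + ∑ n : N, (P.Cc n * (∑ k ∈ s, z.pc n ω k)
                      + P.Cd n * (∑ k ∈ s, z.pd n ω k)) * P.Δ)) := by
          simp only [Finset.sum_add_distrib]
          rw [e1, e2, e3]
          ring
        have hEq : c * (-(πb * ((1/c) * ∑ k ∈ s, z.e ω k))
              + (∑ gg : G, P.Cth gg * ((1/c) * ∑ k ∈ s, z.pth gg ω k) * P.Δ)
              + P.Cns * ((1/c) * ∑ k ∈ s, z.ens ω k)
              + ∑ n : N, (P.Cc n * ((1/c) * ∑ k ∈ s, z.pc n ω k)
                  + P.Cd n * ((1/c) * ∑ k ∈ s, z.pd n ω k)) * P.Δ)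
            = -πb * (∑ k ∈ s, z.e ω k)
              + ((∑ gg : G, P.Cth gg * (∑ k ∈ s, z.pth gg ω k) * P.Δ)
                + (P.Cns * ∑ k ∈ s, z.ens ω k
                  + ∑ n : N, (P.Cc n * (∑ k ∈ s, z.pc n ω k)
                      + P.Cd n * (∑ k ∈ s, z.pd n ω k)) * P.Δ)) := by
          have hg2 : ∑ gg : G, P.Cth gg * ((1/c) * ∑ k ∈ s, z.pth gg ω k) * P.Δ
              = (1/c) * ∑ gg : G, P.Cth gg * (∑ k ∈ s, z.pth gg ω k) * P.Δ := by
            rw [Finset.mul_sum]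
            exact Finset.sum_congr rfl fun gg _ => by ring
          have hn2 : ∑ n : N, (P.Cc n * ((1/c) * ∑ k ∈ s, z.pc n ω k)
                + P.Cd n * ((1/c) * ∑ k ∈ s, z.pd n ω k)) * P.Δ
              = (1/c) * ∑ n : N, (P.Cc n * (∑ k ∈ s, z.pc n ω k)
                + P.Cd n * (∑ k ∈ s, z.pd n ω k)) * P.Δ := by
            rw [Finset.mul_sum]
            exact Finset.sum_congr rfl fun n _ => by ring
          rw [hg2, hn2]
          linear_combination (-πb * (∑ k ∈ s, z.e ω k)
              + ((∑ gg : G, P.Cth gg * (∑ k ∈ s, z.pth gg ω k) * P.Δ)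
                + (P.Cns * ∑ k ∈ s, z.ens ω k
                  + ∑ n : N, (P.Cc n * (∑ k ∈ s, z.pc n ω k)
                      + P.Cd n * (∑ k ∈ s, z.pd n ω k)) * P.Δ))) * mul_one_div_cancel hcne
        have hprice : -πb * (∑ k ∈ s, z.e ω k) ≤ ∑ k ∈ s, (-(P.π ω k) * z.e ω k) := by
          rw [Finset.mul_sum]
          refine Finset.sum_le_sum fun k hk => ?_
          have h1 : P.π ω k ≤ πb := Finset.le_sup' (P.π ω) hk
          have h2 : 0 ≤ z.e ω k := (hnn1 ω k (hkK r.1 hr k hk)).1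
          nlinarith
        rw [hsplit, hEq]
        exact add_le_add hprice le_rfl
      · refine Finset.sum_le_sum fun n _ => ?_
        refine Finset.sum_le_sum fun ω _ => ?_
        rw [hconv]
        refine Finset.sum_le_sum fun r _ => ?_
        simp only [aggregate]
        refine Finset.single_le_sum (f := fun k => P.Cref n * (z.es n ω k - P.Eref n) ^ 2)
          (fun k _ => mul_nonneg (hCref n) (sq_nonneg _)) ?_
        rw [Finset.mem_Ico]
        exact ⟨le_refl _, hmono r.1 r.2⟩
    exact ⟨AggObj P R t hmono (aggregate t z), ⟨aggregate t z, hfeas, rfl⟩, hobj⟩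
  refine ⟨key, ?_⟩
  intro hSne hbdd
  refine le_csInf hSne ?_
  intro b hb
  obtain ⟨vbar, hvbar, hle⟩ := key b hb
  exact le_trans (csInf_le hbdd hvbar) hle
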